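/- Let (A, E, ε) be a B-B-noncommutative probability space. Then there exist a B-B-bimodule with specified B-projection (X, X̊, p) and a unital algebra homomorphism θ : A → L(X) such that θ(ε(b₁⊗b₂)) acts on X as ξ ↦ b₁·ξ·b₂ for all b₁, b₂ ∈ B, θ(A_ℓ) ⊆ L_ℓ(X), θ(A_r) ⊆ L_r(X), and E_{L(X)}(θ(T)) = E(T) for all T ∈ A. -/

import Mathlib

open scoped TensorProduct

/-! `B`-`B`-non-commutative probability spaces. -/

variable (B A : Type) [Ring B] [Algebra ℂ B] [Ring A] [Algebra ℂ A]

/-- A `B`-`B`-non-commutative probability space structure on a unital ℂ-algebra `A`: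
a unital homomorphism `ε : B ⊗ B^op → A` injective on `B ⊗ 1` and on `1 ⊗ B`, and a
ℂ-linear expectation `E : A → B` satisfying `E(ε(b₁⊗b₂)T) = b₁ E(T) b₂`,
`E(T ε(b⊗1)) = E(T ε(1⊗b))`, and `E(1) = 1`. -/
structure BBncps where
  eps : (B ⊗[ℂ] Bᵐᵒᵖ) →ₐ[ℂ] A
  E : A →ₗ[ℂ] B
  E_one : E 1 = 1
  injL : Function.Injective fun b : B => eps (b ⊗ₜ[ℂ] (1 : Bᵐᵒᵖ))
  injR : Function.Injective fun b : B => eps ((1 : B) ⊗ₜ[ℂ] MulOpposite.op b)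
  E_eps : ∀ (b₁ b₂ : B) (T : A),
    E (eps (b₁ ⊗ₜ[ℂ] MulOpposite.op b₂) * T) = b₁ * E T * b₂
  E_right : ∀ (b : B) (T : A),
    E (T * eps (b ⊗ₜ[ℂ] (1 : Bᵐᵒᵖ))) = E (T * eps ((1 : B) ⊗ₜ[ℂ] MulOpposite.op b))

variable {B A}

/-- `L_b = ε(b ⊗ 1)`. -/
noncomputable def BBncps.Lb (P : BBncps B A) (b : B) : A := P.eps (b ⊗ₜ[ℂ] (1 : Bᵐᵒᵖ))

/-- `R_b = ε(1 ⊗ b)`. -/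
noncomputable def BBncps.Rb (P : BBncps B A) (b : B) : A := P.eps ((1 : B) ⊗ₜ[ℂ] MulOpposite.op b)

/-- The left algebra `A_ℓ` of elements commuting with all `R_b`. -/
def BBncps.Aleft (P : BBncps B A) : Set A := {T | ∀ b : B, T * P.Rb b = P.Rb b * T}

/-- The right algebra `A_r` of elements commuting with all `L_b`. -/
def BBncps.Aright (P : BBncps B A) : Set A := {T | ∀ b : B, T * P.Lb b = P.Lb b * T}

/-- A `B`-`B`-bimodule with a specified `B`-projection: a ℂ-module `X` with commuting
unital left and right `B`-actions, an embedding `ι : B → X` and a projection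
`p : X → B` with `p ∘ ι = id`, such that `ι` is a bimodule map and the kernel of `p`
(the complement `X̊`) is invariant under both actions, so that `X = B ⊕ X̊` as
`B`-`B`-bimodules. -/
structure BBBimod (B : Type) [Ring B] [Algebra ℂ B] where
  X : Type
  [addX : AddCommGroup X]
  [modX : Module ℂ X]
  lAct : B →ₐ[ℂ] Module.End ℂ X
  rAct : Bᵐᵒᵖ →ₐ[ℂ] Module.End ℂ X
  comm : ∀ (b : B) (b' : Bᵐᵒᵖ), lAct b * rAct b' = rAct b' * lAct b
  iota : B →ₗ[ℂ] X
  proj : X →ₗ[ℂ] B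
  proj_iota : ∀ b : B, proj (iota b) = b
  lAct_iota : ∀ b c : B, lAct b (iota c) = iota (b * c)
  rAct_iota : ∀ b c : B, rAct (MulOpposite.op b) (iota c) = iota (c * b)
  inv_l : ∀ (b : B) (x : X), proj x = 0 → proj (lAct b x) = 0
  inv_r : ∀ (b : Bᵐᵒᵖ) (x : X), proj x = 0 → proj (rAct b x) = 0

attribute [instance] BBBimod.addX BBBimod.modX

namespace BBBimod

variable {B : Type} [Ring B] [Algebra ℂ B] (M : BBBimod B)

/-- The expectation `E_{L(X)}(T) = p (T (1_B ⊕ 0))` on `L(X)`. -/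
def ELX (T : Module.End ℂ M.X) : B := M.proj (T (M.iota 1))

/-- The left operators `L_ℓ(X)`: those commuting with the right `B`-action. -/
def Lleft : Set (Module.End ℂ M.X) :=
  {T | ∀ b : Bᵐᵒᵖ, T * M.rAct b = M.rAct b * T}

/-- The right operators `L_r(X)`: those commuting with the left `B`-action. -/
def Lright : Set (Module.End ℂ M.X) :=
  {T | ∀ b : B, T * M.lAct b = M.lAct b * T}

end BBBimod


section Construction

variable {B A : Type} [Ring B] [Algebra ℂ B] [Ring A] [Algebra ℂ A]

/-- The left ideal (as a ℂ-submodule) spanned by elements `T (L_b - R_b)`. -/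
noncomputable def BBncps.N (P : BBncps B A) : Submodule ℂ A :=
  Submodule.span ℂ (Set.range fun p : A × B => p.1 * (P.Lb p.2 - P.Rb p.2))

lemma BBncps.mul_mem_N (P : BBncps B A) (S : A) {x : A} (hx : x ∈ P.N) :
    S * x ∈ P.N := by
  induction hx using Submodule.span_induction with
  | mem x hx =>
      obtain ⟨⟨T, b⟩, rfl⟩ := hx
      exact Submodule.subset_span ⟨(S * T, b), by simp [mul_assoc]⟩
  | zero => simp
  | add x y hx hy ihx ihy => simpa [mul_add] using add_mem ihx ihy
  | smul r x hx ih => simpa [mul_smul_comm] using Submodule.smul_mem _ r ih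

lemma BBncps.N_le_ker (P : BBncps B A) : P.N ≤ LinearMap.ker P.E := by
  rw [BBncps.N, Submodule.span_le]
  rintro x ⟨⟨T, b⟩, rfl⟩
  simp [LinearMap.mem_ker, mul_sub, map_sub, BBncps.Lb, BBncps.Rb, P.E_right b T]

/-- The induced left regular representation on `A ⧸ N`. -/
noncomputable def BBncps.theta (P : BBncps B A) : A →ₐ[ℂ] Module.End ℂ (A ⧸ P.N) where
  toFun S := Submodule.mapQ P.N P.N (LinearMap.mulLeft ℂ S)
      (fun x hx => P.mul_mem_N S hx)
  map_one' := by
    apply LinearMap.ext; intro x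
    obtain ⟨a, rfl⟩ := Submodule.Quotient.mk_surjective _ x
    simp [Submodule.mapQ_apply]
  map_mul' S S' := by
    apply LinearMap.ext; intro x
    obtain ⟨a, rfl⟩ := Submodule.Quotient.mk_surjective _ x
    simp [Submodule.mapQ_apply, mul_assoc]
    rfl
  map_zero' := by
    apply LinearMap.ext; intro x
    obtain ⟨a, rfl⟩ := Submodule.Quotient.mk_surjective _ x
    simp [Submodule.mapQ_apply]
  map_add' S S' := by
    apply LinearMap.ext; intro x
    obtain ⟨a, rfl⟩ := Submodule.Quotient.mk_surjective _ x
    simp [Submodule.mapQ_apply, add_mul]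
    show Submodule.Quotient.mk ((S + S') * a) = Submodule.Quotient.mk (S * a) + Submodule.Quotient.mk (S' * a)
    rw [add_mul, Submodule.Quotient.mk_add]
  commutes' r := by
    apply LinearMap.ext; intro x
    obtain ⟨a, rfl⟩ := Submodule.Quotient.mk_surjective _ x
    simp only [Submodule.mapQ_apply, LinearMap.mulLeft_apply,
      Module.algebraMap_end_apply, ← Submodule.Quotient.mk_smul, Algebra.smul_def]
    rfl

lemma BBncps.theta_apply (P : BBncps B A) (S a : A) :
    P.theta S (Submodule.Quotient.mk a) = Submodule.Quotient.mk (S * a) := by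
  simp [BBncps.theta, Submodule.mapQ_apply]
  rfl

/-- The bimodule `A ⧸ N` with `ι(b) = [L_b]` and `p = Ē`. -/
noncomputable def BBncps.M (P : BBncps B A) : BBBimod B where
  X := A ⧸ P.N
  lAct := P.theta.comp (P.eps.comp Algebra.TensorProduct.includeLeft)
  rAct := P.theta.comp (P.eps.comp Algebra.TensorProduct.includeRight)
  comm b b' := by
    simp only [AlgHom.comp_apply, Algebra.TensorProduct.includeLeft_apply,
      Algebra.TensorProduct.includeRight_apply, ← map_mul,
      Algebra.TensorProduct.tmul_mul_tmul, one_mul, mul_one]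
  iota := P.N.mkQ ∘ₗ (P.eps.toLinearMap ∘ₗ (TensorProduct.mk ℂ B Bᵐᵒᵖ).flip 1)
  proj := P.N.liftQ P.E P.N_le_ker
  proj_iota b := by
    have h := P.E_eps b 1 1
    rw [mul_one, P.E_one, mul_one, MulOpposite.op_one, mul_one] at h
    simpa [Submodule.liftQ_apply] using h
  lAct_iota b c := by
    simp only [AlgHom.comp_apply, Algebra.TensorProduct.includeLeft_apply,
      LinearMap.comp_apply, AlgHom.toLinearMap_apply, TensorProduct.mk_apply,
      LinearMap.flip_apply, Submodule.mkQ_apply, BBncps.theta_apply, ← map_mul,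
      Algebra.TensorProduct.tmul_mul_tmul, one_mul, mul_one]
  rAct_iota b c := by
    simp only [AlgHom.comp_apply, Algebra.TensorProduct.includeRight_apply,
      LinearMap.comp_apply, AlgHom.toLinearMap_apply, TensorProduct.mk_apply,
      LinearMap.flip_apply, Submodule.mkQ_apply, BBncps.theta_apply]
    rw [Submodule.Quotient.eq]
    have h : P.eps ((1 : B) ⊗ₜ[ℂ] MulOpposite.op b) * P.eps (c ⊗ₜ[ℂ] (1 : Bᵐᵒᵖ)) -
        P.eps ((c * b) ⊗ₜ[ℂ] (1 : Bᵐᵒᵖ)) =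
        -(P.eps (c ⊗ₜ[ℂ] (1 : Bᵐᵒᵖ)) * (P.Lb b - P.Rb b)) := by
      simp only [BBncps.Lb, BBncps.Rb, mul_sub, ← map_mul,
        Algebra.TensorProduct.tmul_mul_tmul, one_mul, mul_one]
      abel
    rw [h]
    exact neg_mem (Submodule.subset_span ⟨(P.eps (c ⊗ₜ[ℂ] (1 : Bᵐᵒᵖ)), b), rfl⟩)
  inv_l b x hx := by
    obtain ⟨a, rfl⟩ := Submodule.Quotient.mk_surjective _ x
    have h1 : (1 : Bᵐᵒᵖ) = MulOpposite.op (1 : B) := rfl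
    simp only [Submodule.liftQ_apply] at hx ⊢
    simp only [AlgHom.comp_apply, Algebra.TensorProduct.includeLeft_apply,
      BBncps.theta_apply, Submodule.liftQ_apply, h1, P.E_eps b 1 a, hx,
      mul_zero, zero_mul, mul_one]
  inv_r b x hx := by
    obtain ⟨a, rfl⟩ := Submodule.Quotient.mk_surjective _ x
    simp only [Submodule.liftQ_apply] at hx ⊢
    have hb : b = MulOpposite.op b.unop := rfl
    rw [hb]
    simp only [AlgHom.comp_apply, Algebra.TensorProduct.includeRight_apply,
      BBncps.theta_apply, Submodule.liftQ_apply, P.E_eps 1 b.unop a, hx,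
      mul_zero, zero_mul, one_mul]

end Construction

/-- (Theorem 3.2.4 of [CNS15].)  Every `B`-`B`-non-commutative
probability space `(A, E, ε)` admits a `B`-`B`-bimodule with specified `B`-projection
`(X, X̊, p)` and a unital algebra homomorphism `θ : A → L(X)` such that
`θ(ε(b₁ ⊗ b₂))` acts as `ξ ↦ b₁ · ξ · b₂`, `θ(A_ℓ) ⊆ L_ℓ(X)`, `θ(A_r) ⊆ L_r(X)`, and
`E_{L(X)} ∘ θ = E`. -/
theorem statement3 {B A : Type} [Ring B] [Algebra ℂ B] [Ring A] [Algebra ℂ A]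
    (P : BBncps B A) :
    ∃ (M : BBBimod B) (θ : A →ₐ[ℂ] Module.End ℂ M.X),
      (∀ b₁ b₂ : B,
        θ (P.eps (b₁ ⊗ₜ[ℂ] MulOpposite.op b₂)) = M.lAct b₁ * M.rAct (MulOpposite.op b₂)) ∧
      (∀ T ∈ P.Aleft, θ T ∈ M.Lleft) ∧
      (∀ T ∈ P.Aright, θ T ∈ M.Lright) ∧
      (∀ T : A, M.ELX (θ T) = P.E T) := by
  refine ⟨P.M, P.theta, ?_, ?_, ?_, ?_⟩
  · intro b₁ b₂
    show P.theta _ = P.theta _ * P.theta _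
    rw [← map_mul]
    congr 1
    show P.eps _ = P.eps (b₁ ⊗ₜ[ℂ] (1 : Bᵐᵒᵖ)) * P.eps ((1 : B) ⊗ₜ[ℂ] MulOpposite.op b₂)
    rw [← map_mul, Algebra.TensorProduct.tmul_mul_tmul, one_mul, mul_one]
  · intro T hT b
    have h2 := hT b.unop
    rw [BBncps.Rb, MulOpposite.op_unop] at h2
    show P.theta T * P.theta _ = P.theta _ * P.theta T
    rw [← map_mul, ← map_mul]
    show P.theta (T * P.eps ((1 : B) ⊗ₜ[ℂ] b)) = P.theta (P.eps ((1 : B) ⊗ₜ[ℂ] b) * T)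
    rw [h2]
  · intro T hT b
    have h2 := hT b
    rw [BBncps.Lb] at h2
    show P.theta T * P.theta _ = P.theta _ * P.theta T
    rw [← map_mul, ← map_mul]
    show P.theta (T * P.eps (b ⊗ₜ[ℂ] (1 : Bᵐᵒᵖ))) = P.theta (P.eps (b ⊗ₜ[ℂ] (1 : Bᵐᵒᵖ)) * T)
    rw [h2]
  · intro T
    show (P.M.proj) (P.theta T ((P.M.iota) 1)) = P.E T
    have h1 : (P.M.iota) (1 : B) = Submodule.Quotient.mk (1 : A) := by
      show Submodule.Quotient.mk (P.eps ((1:B) ⊗ₜ[ℂ] (1:Bᵐᵒᵖ))) = _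
      rw [show ((1:B) ⊗ₜ[ℂ] (1:Bᵐᵒᵖ)) = (1 : B ⊗[ℂ] Bᵐᵒᵖ) from rfl, map_one]
    rw [h1]
    show P.N.liftQ P.E P.N_le_ker (P.theta T (Submodule.Quotient.mk 1)) = P.E T
    rw [BBncps.theta_apply, Submodule.liftQ_apply, mul_one]
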